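/- Let I be a monomial ideal of R = K[t_1,...,t_r] with r ≥ 2, and let I[i] be the ideal obtained from I by setting t_i = 1. Then the saturation of I^n with respect to the maximal ideal satisfies I^n : (t_1,...,t_r)^∞ = ∩_{i=1}^r I[i]^n for all n ≥ 1. -/

import Mathlib

open MvPolynomial

lemma span_monomial_pow {K : Type*} [Field K] {r s : ℕ} (a : Fin s → (Fin r →₀ ℕ)) (n : ℕ) :
    (Ideal.span (Set.range fun i => monomial (a i) (1 : K)))^n =
      Ideal.span ((fun c => monomial c (1:K)) ''
        (Set.range fun k : Fin n → Fin s => ∑ j, a (k j))) := by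
  induction n with
  | zero => simp [Ideal.span_le]
  | succ n ih =>
    rw [pow_succ, ih, Ideal.span_mul_span']
    congr 1
    ext p
    constructor
    · intro hp
      obtain ⟨x, hx, y, hy, rfl⟩ := Set.mem_mul.mp hp
      obtain ⟨-, ⟨k, rfl⟩, rfl⟩ := hx
      obtain ⟨i, rfl⟩ := hy
      exact ⟨_, ⟨Fin.snoc k i, rfl⟩, by simp [monomial_mul, Fin.sum_univ_castSucc]⟩
    · rintro ⟨-, ⟨k, rfl⟩, rfl⟩
      refine Set.mem_mul.mpr ⟨monomial (∑ j : Fin n, a (k j.castSucc)) 1,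
        ⟨_, ⟨fun j => k j.castSucc, rfl⟩, rfl⟩,
        monomial (a (k (Fin.last n))) 1, ⟨k (Fin.last n), rfl⟩, ?_⟩
      simp [monomial_mul, Fin.sum_univ_castSucc]

lemma mem_monomial_span_pow {K : Type*} [Field K] {r s : ℕ} (a : Fin s → (Fin r →₀ ℕ)) (n : ℕ)
    (f : MvPolynomial (Fin r) K) :
    f ∈ (Ideal.span (Set.range fun i => monomial (a i) (1 : K)))^n ↔
      ∀ m ∈ f.support, ∃ k : Fin n → Fin s, (∑ j, a (k j)) ≤ m := by
  rw [span_monomial_pow, mem_ideal_span_monomial_image]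
  simp

/-- For a monomial ideal `I` of `K[t_1,…,t_r]` with `r ≥ 2`,
`I^n : (t_1,…,t_r)^∞ = ⋂_{i=1}^r I[i]^n` for all `n ≥ 1`, where `I[i]` is the ideal
obtained from `I` by setting `t_i = 1`. -/
theorem stmt_2 {K : Type*} [Field K] {r s : ℕ} (hr : 2 ≤ r)
    (a : Fin s → (Fin r →₀ ℕ)) (n : ℕ) (hn : 1 ≤ n) :
    (⨆ k : ℕ,
        Submodule.colon
          ((Ideal.span (Set.range fun i => monomial (a i) (1 : K))) ^ n)
          (((Ideal.span (Set.range fun i : Fin r => (X i : MvPolynomial (Fin r) K))) ^ k :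
            Ideal (MvPolynomial (Fin r) K)) : Set (MvPolynomial (Fin r) K))) =
      ⨅ i : Fin r,
        (Ideal.span (Set.range fun k => monomial (Finsupp.update (a k) i 0) (1 : K))) ^ n := by
  classical
  have hXm : (fun i : Fin r => (X i : MvPolynomial (Fin r) K)) =
      fun i => monomial (Finsupp.single i 1) (1 : K) := by
    funext i; rw [← X_pow_eq_monomial, pow_one]
  apply le_antisymm
  · apply iSup_le
    intro k
    apply le_iInf
    intro i f hf
    have hX : (X i : MvPolynomial (Fin r) K) ^ k ∈
        (Ideal.span (Set.range fun i : Fin r => (X i : MvPolynomial (Fin r) K)))^k :=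
      Ideal.pow_mem_pow (Ideal.subset_span (Set.mem_range_self i)) k
    have h1 := Submodule.mem_colon.mp hf _ hX
    rw [smul_eq_mul, X_pow_eq_monomial] at h1
    rw [mem_monomial_span_pow] at h1 ⊢
    intro m hm
    have hm' : m + Finsupp.single i k ∈
        (f * monomial (Finsupp.single i k) (1:K)).support := by
      rw [MvPolynomial.mem_support_iff, coeff_mul_monomial, mul_one]
      exact MvPolynomial.mem_support_iff.mp hm
    obtain ⟨k', hk'⟩ := h1 _ hm'
    refine ⟨k', Finsupp.le_def.mpr fun x => ?_⟩
    rw [Finset.sum_apply']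
    rcases eq_or_ne x i with rfl | hx
    · simp [Finsupp.coe_update]
    · have := (Finsupp.le_def.mp hk') x
      rw [Finset.sum_apply', Finsupp.add_apply, Finsupp.single_apply,
        if_neg (fun h => hx h.symm), add_zero] at this
      refine le_trans (le_of_eq (Finset.sum_congr rfl fun j _ => ?_)) this
      simp [Finsupp.coe_update, Function.update_apply, hx]
  · -- reverse direction
    set B := Finset.univ.sup (fun l : Fin s => Finset.univ.sup fun i : Fin r => a l i) with hB
    have haB : ∀ l i, a l i ≤ B := by
      intro l i
      calc a l i ≤ Finset.univ.sup fun i : Fin r => a l i := Finset.le_sup (Finset.mem_univ i)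
        _ ≤ B := Finset.le_sup (f := fun l : Fin s => Finset.univ.sup fun i : Fin r => a l i)
          (Finset.mem_univ l)
    set k₀ := r * (n * B + 1) with hk₀
    refine le_trans ?_ (le_iSup _ k₀)
    intro f hf
    rw [Submodule.mem_colon]
    intro p hp
    rw [hXm, span_monomial_pow] at hp
    rw [smul_eq_mul]
    induction hp using Submodule.span_induction with
    | mem q hq =>
      obtain ⟨-, ⟨t, rfl⟩, rfl⟩ := hq
      -- pigeonhole: some coordinate of c := ∑ j, single (t j) 1 is ≥ n*B+1
      set c : Fin r →₀ ℕ := ∑ j : Fin k₀, Finsupp.single (t j) 1 with hc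
      have hcsum : ∑ i : Fin r, c i = k₀ := by
        have h1 : ∀ i : Fin r, c i = ∑ j : Fin k₀, if t j = i then 1 else 0 := by
          intro i
          rw [hc, Finset.sum_apply']
          exact Finset.sum_congr rfl fun j _ => by rw [Finsupp.single_apply]
        rw [Finset.sum_congr rfl (fun i _ => h1 i), Finset.sum_comm]
        simp [Finset.sum_ite_eq]
      have hpi : ∃ i : Fin r, n * B + 1 ≤ c i := by
        by_contra h
        push_neg at h
        have h2 : ∑ i : Fin r, c i ≤ ∑ _i : Fin r, n * B :=
          Finset.sum_le_sum fun i _ => Nat.lt_succ_iff.mp (h i)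
        rw [hcsum, Finset.sum_const, Finset.card_univ, Fintype.card_fin, smul_eq_mul,
          hk₀, Nat.mul_succ] at h2
        omega
      obtain ⟨i, hi⟩ := hpi
      have hfi : f ∈ (Ideal.span (Set.range fun k =>
          monomial (Finsupp.update (a k) i 0) (1 : K))) ^ n :=
        (Submodule.mem_iInf _).mp hf i
      rw [mem_monomial_span_pow] at hfi
      rw [mem_monomial_span_pow]
      intro m hm
      have hsupp := MvPolynomial.support_mul _ _ hm
      rw [support_monomial, if_neg (one_ne_zero' K)] at hsupp
      obtain ⟨m', hm', c', hc', rfl⟩ := Finset.mem_add.mp hsupp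
      obtain rfl : c' = c := Finset.mem_singleton.mp hc'
      obtain ⟨k', hk'⟩ := hfi m' hm'
      refine ⟨k', Finsupp.le_def.mpr fun x => ?_⟩
      rw [Finset.sum_apply', Finsupp.add_apply]
      rcases eq_or_ne x i with rfl | hx
      · have hbd : ∑ j : Fin n, (a (k' j)) x ≤ n * B := by
          calc ∑ j : Fin n, (a (k' j)) x ≤ ∑ _j : Fin n, B :=
                Finset.sum_le_sum fun j _ => haB _ _
            _ = n * B := by simp [Finset.sum_const, mul_comm]
        omega
      · have := (Finsupp.le_def.mp hk') x
        rw [Finset.sum_apply'] at this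
        have heq : ∑ j : Fin n, (Finsupp.update (a (k' j)) i 0) x
            = ∑ j : Fin n, (a (k' j)) x :=
          Finset.sum_congr rfl fun j _ => by
            simp [Finsupp.coe_update, Function.update_apply, hx]
        rw [heq] at this
        exact le_trans this (Nat.le_add_right _ _)
    | zero => simp
    | add q q' _ _ h1 h2 => rw [mul_add]; exact Ideal.add_mem _ h1 h2
    | smul d q _ h1 => rw [smul_eq_mul, mul_left_comm]; exact Ideal.mul_mem_left _ _ h1
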